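/- Let G be a finite non-abelian nilpotent group. Then the power graph P(G) is not a line graph: there is no graph Γ such that P(G) is isomorphic to the line graph of Γ. -/

import Mathlib

/-- The power graph of a group `G`: distinct `x, y` are adjacent iff one is a positive
integer power of the other. -/
def powerGraph (G : Type) [Group G] : SimpleGraph G where
  Adj x y := x ≠ y ∧ ((∃ n : ℕ, 0 < n ∧ y ^ n = x) ∨ (∃ n : ℕ, 0 < n ∧ x ^ n = y))
  symm := by
    refine ⟨?_⟩
    rintro x y ⟨hxy, h⟩
    exact ⟨hxy.symm, h.symm⟩
  loopless := by
    refine ⟨?_⟩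
    rintro x ⟨h, -⟩
    exact h rfl

/-- A vertex is dominating if it is adjacent to every other vertex. -/
def SimpleGraph.IsDominatingVertex {V : Type} (H : SimpleGraph V) (v : V) : Prop :=
  ∀ u, u ≠ v → H.Adj v u

/-- The proper power graph: the induced subgraph of the power graph on the
set of non-dominating vertices. -/
def properPowerGraph (G : Type) [Group G] :=
  (powerGraph G).induce {x : G | ¬ (powerGraph G).IsDominatingVertex x}

/-- A graph is a line graph if it is isomorphic to the line graph of some graph. -/
def IsLineGraph {V : Type} (H : SimpleGraph V) : Prop :=
  ∃ (W : Type) (Γ : SimpleGraph W), Nonempty (H ≃g Γ.lineGraph)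


lemma pg_one_adj {G : Type} [Group G] [Finite G] {x : G} (hx : x ≠ 1) :
    (powerGraph G).Adj 1 x :=
  ⟨hx.symm, Or.inl ⟨orderOf x, orderOf_pos x, pow_orderOf_eq_one x⟩⟩

lemma pg_not_adj {G : Type} [Group G] {x y : G} (h : x * y ≠ y * x) :
    ¬ (powerGraph G).Adj x y := by
  rintro ⟨-, (⟨n, -, rfl⟩ | ⟨n, -, rfl⟩)⟩
  · exact h (by rw [← pow_succ, ← pow_succ'])
  · exact h (by rw [← pow_succ, ← pow_succ'])

theorem powerGraph_not_isLineGraph_of_nonabelian_nilpotent (G : Type) [Group G] [Finite G]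
    (hnil : Group.IsNilpotent G) (hna : ∃ a b : G, a * b ≠ b * a) :
    ¬ IsLineGraph (powerGraph G) := by
  rintro ⟨W, Γ, ⟨f⟩⟩
  obtain ⟨a, b, hab⟩ := hna
  -- basic nonequalities
  have ha1 : a ≠ 1 := by rintro rfl; simp at hab
  have hb1 : b ≠ 1 := by rintro rfl; simp at hab
  have hab1 : a * b ≠ 1 := by
    intro h
    rw [mul_eq_one_iff_eq_inv] at h
    subst h
    simp at hab
  have h_a_ab : a * (a * b) ≠ (a * b) * a := by
    intro h
    rw [mul_assoc a b a] at h
    exact hab (mul_left_cancel h)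
  have h_b_ab : b * (a * b) ≠ (a * b) * b := by
    intro h
    rw [← mul_assoc] at h
    exact hab (mul_right_cancel h).symm
  -- adjacency from 1
  have A1 : Γ.lineGraph.Adj (f 1) (f a) := f.map_rel_iff.2 (pg_one_adj ha1)
  have A2 : Γ.lineGraph.Adj (f 1) (f b) := f.map_rel_iff.2 (pg_one_adj hb1)
  have A3 : Γ.lineGraph.Adj (f 1) (f (a * b)) := f.map_rel_iff.2 (pg_one_adj hab1)
  -- non-adjacency among a, b, ab
  have N1 : ¬ Γ.lineGraph.Adj (f a) (f b) := fun h => pg_not_adj hab (f.map_rel_iff.1 h)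
  have N2 : ¬ Γ.lineGraph.Adj (f a) (f (a * b)) :=
    fun h => pg_not_adj h_a_ab (f.map_rel_iff.1 h)
  have N3 : ¬ Γ.lineGraph.Adj (f b) (f (a * b)) :=
    fun h => pg_not_adj h_b_ab (f.map_rel_iff.1 h)
  have hne_ab : a ≠ b := fun h => hab (by rw [h])
  have hne_a_ab : a ≠ a * b := fun h => h_a_ab (by rw [← h])
  have hne_b_ab : b ≠ a * b := fun h => h_b_ab (by rw [← h])
  have Nab : f a ≠ f b := fun h => hne_ab (f.injective h)
  have Naab : f a ≠ f (a * b) := fun h => hne_a_ab (f.injective h)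
  have Nbab : f b ≠ f (a * b) := fun h => hne_b_ab (f.injective h)
  -- extract shared vertices
  rw [SimpleGraph.lineGraph_adj_iff_exists] at A1 A2 A3
  obtain ⟨-, v1, hv1e, hv1⟩ := A1
  obtain ⟨-, v2, hv2e, hv2⟩ := A2
  obtain ⟨-, v3, hv3e, hv3⟩ := A3
  -- represent f 1 as s(u, v)
  obtain ⟨⟨u, v⟩, huv⟩ := Quot.exists_rep ((f 1 : Γ.edgeSet) : Sym2 W)
  have hmem : ∀ w : W, w ∈ ((f 1 : Γ.edgeSet) : Sym2 W) → w = u ∨ w = v := by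
    intro w hw; rw [← huv] at hw; exact Sym2.mem_iff.1 hw
  have key12 : ∀ w : W, w ∈ ((f a : Γ.edgeSet) : Sym2 W) →
      w ∈ ((f b : Γ.edgeSet) : Sym2 W) → False := fun w h1 h2 =>
    N1 (SimpleGraph.lineGraph_adj_iff_exists.2 ⟨Nab, w, h1, h2⟩)
  have key13 : ∀ w : W, w ∈ ((f a : Γ.edgeSet) : Sym2 W) →
      w ∈ ((f (a * b) : Γ.edgeSet) : Sym2 W) → False := fun w h1 h2 =>
    N2 (SimpleGraph.lineGraph_adj_iff_exists.2 ⟨Naab, w, h1, h2⟩)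
  have key23 : ∀ w : W, w ∈ ((f b : Γ.edgeSet) : Sym2 W) →
      w ∈ ((f (a * b) : Γ.edgeSet) : Sym2 W) → False := fun w h1 h2 =>
    N3 (SimpleGraph.lineGraph_adj_iff_exists.2 ⟨Nbab, w, h1, h2⟩)
  rcases hmem v1 hv1e with rfl | rfl <;> rcases hmem v2 hv2e with h2 | h2 <;>
    rcases hmem v3 hv3e with h3 | h3 <;> subst h2 <;> first
    | exact key12 _ hv1 hv2
    | exact key13 _ hv1 (h3 ▸ hv3)
    | exact key23 _ hv2 (h3 ▸ hv3)
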